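/- Suppose there is no partition of {1, ..., 2m} into disjoint pairs (i,j) with λ_i + λ_j = 0. Then every 2-form lying in the span of {φ^0 ∧ φ̄^0} ∪ {φ^{i} ∧ φ^{j}, φ^{i} ∧ φ̄^{j}, φ̄^{i} ∧ φ̄^{j} : λ_i + λ_j = 0} is degenerate, i.e., its (2m+1)-st power vanishes. -/

import Mathlib

open ExteriorAlgebra Finset Pointwise

section AuxLemmas

variable {R : Type*} {M : Type*} [CommRing R] [AddCommGroup M] [Module R M]

/-- A product of `ι`'s over a list with a duplicate entry vanishes. -/
lemma prod_map_iota_eq_zero (l : List M) (h : ¬ l.Nodup) :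
    (l.map (ι R)).prod = 0 := by
  have h1 : l.map (ι R) = List.ofFn (fun i => ι R (l.get i)) := by
    conv_lhs => rw [← List.ofFn_get l]
    rw [List.map_ofFn]
    rfl
  have h2 : (l.map (ι R)).prod = ιMulti R l.length l.get := by
    rw [h1, ιMulti_apply]
  rw [List.nodup_iff_injective_get] at h
  rw [Function.not_injective_iff] at h
  obtain ⟨i, j, hij, hne⟩ := h
  rw [h2]
  exact (ιMulti R l.length).map_eq_zero_of_eq l.get hij hne

/-- Flattening a product of pairs of `ι`'s. -/
lemma prod_ofFn_pairs {n : ℕ} (a b : Fin n → M) :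
    (List.ofFn fun k => ι R (a k) * ι R (b k)).prod
      = (((List.ofFn fun k => [a k, b k]).flatten).map (ι R)).prod := by
  induction n with
  | zero => simp
  | succ n ih =>
      rw [List.ofFn_succ, List.ofFn_succ (f := fun k => [a k, b k])]
      simp only [List.prod_cons, List.flatten_cons, List.map_append, List.prod_append,
        ih (fun k => a k.succ) (fun k => b k.succ)]
      simp [mul_assoc]

lemma exists_involution_aux {α : Type*} [DecidableEq α] (f : α → ℝ) :
    ∀ n (s : Finset α), s.card = n →
    (∀ c : ℝ, (s.filter fun i => f i = c).card = (s.filter fun i => f i = -c).card) →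
    Even (s.filter fun i => f i = (0:ℝ)).card →
    ∃ σ : Equiv.Perm α, (∀ x, σ (σ x) = x) ∧
      (∀ x ∈ s, σ x ∈ s ∧ σ x ≠ x ∧ f x + f (σ x) = 0) ∧ (∀ x ∉ s, σ x = x) := by
  intro n
  induction n using Nat.strong_induction_on with
  | _ n IH =>
    intro s hcard hcnt heven
    rcases s.eq_empty_or_nonempty with rfl | ⟨x, hx⟩
    · exact ⟨1, fun x => rfl, fun x hx => absurd hx (by simp), fun x _ => rfl⟩
    · -- find a partner y for x
      have hy : ∃ y ∈ s, y ≠ x ∧ f x + f y = 0 := by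
        by_cases hfx : f x = 0
        · have hx0 : x ∈ s.filter fun i => f i = (0:ℝ) := by
            simp [Finset.mem_filter, hx, hfx]
          have h1 : 1 < (s.filter fun i => f i = (0:ℝ)).card := by
            rcases heven with ⟨r, hr⟩
            have : 0 < (s.filter fun i => f i = (0:ℝ)).card := Finset.card_pos.2 ⟨x, hx0⟩
            omega
          obtain ⟨y, hy, hyx⟩ := Finset.exists_mem_ne h1 x
          rw [Finset.mem_filter] at hy
          exact ⟨y, hy.1, hyx, by rw [hfx, hy.2]; ring⟩
        · have hx1 : x ∈ s.filter fun i => f i = f x := by simp [Finset.mem_filter, hx]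
          have h1 : 0 < (s.filter fun i => f i = -(f x)).card := by
            rw [← hcnt (f x)]
            exact Finset.card_pos.2 ⟨x, hx1⟩
          obtain ⟨y, hy⟩ := Finset.card_pos.1 h1
          rw [Finset.mem_filter] at hy
          refine ⟨y, hy.1, fun h => ?_, by rw [hy.2]; ring⟩
          rw [h] at hy
          apply hfx; linarith [hy.2]
      obtain ⟨y, hys, hyx, hsum⟩ := hy
      have hfy : f y = -f x := by linarith
      set s' : Finset α := (s.erase x).erase y with hs'
      have hxs' : x ∉ s' := fun h => (Finset.mem_erase.1 (Finset.mem_of_mem_erase h)).1 rfl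
      have hys' : y ∉ s' := fun h => (Finset.mem_erase.1 h).1 rfl
      have hsub : s' ⊆ s := fun z hz => Finset.mem_of_mem_erase (Finset.mem_of_mem_erase hz)
      have hmem' : ∀ z, z ∈ s' ↔ z ∈ s ∧ z ≠ x ∧ z ≠ y := by
        intro z
        simp only [hs', Finset.mem_erase]
        tauto
      have hyex : y ∈ s.erase x := Finset.mem_erase.2 ⟨hyx, hys⟩
      have hcard' : s'.card = n - 2 := by
        rw [hs', Finset.card_erase_of_mem hyex, Finset.card_erase_of_mem hx, hcard]
        omega
      have hn2 : 2 ≤ n := by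
        have h2 := Finset.card_erase_add_one hyex
        have h3 := Finset.card_erase_add_one hx
        omega
      have hfilter' : ∀ c : ℝ, (s'.filter fun i => f i = c)
          = ((s.filter fun i => f i = c).erase x).erase y := by
        intro c
        ext z
        simp only [Finset.mem_filter, Finset.mem_erase, hmem' z]
        tauto
      have key : ∀ c : ℝ, (s'.filter fun i => f i = c).card
          + ((if f x = c then 1 else 0) + (if f y = c then 1 else 0))
          = (s.filter fun i => f i = c).card := by
        intro c
        rw [hfilter' c]
        by_cases h1 : f x = c <;> by_cases h2 : f y = c
        · have hxm : x ∈ s.filter fun i => f i = c := by simp [Finset.mem_filter, hx, h1]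
          have hym : y ∈ (s.filter fun i => f i = c).erase x :=
            Finset.mem_erase.2 ⟨hyx, by simp [Finset.mem_filter, hys, h2]⟩
          have e1 := Finset.card_erase_add_one hym
          have e2 := Finset.card_erase_add_one hxm
          rw [if_pos h1, if_pos h2]
          omega
        · have hxm : x ∈ s.filter fun i => f i = c := by simp [Finset.mem_filter, hx, h1]
          have hyn : y ∉ (s.filter fun i => f i = c).erase x := by
            simp only [Finset.mem_erase, Finset.mem_filter]
            tauto
          rw [Finset.erase_eq_of_notMem hyn]
          have e2 := Finset.card_erase_add_one hxm
          rw [if_pos h1, if_neg h2]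
          omega
        · have hxn : x ∉ s.filter fun i => f i = c := by simp [Finset.mem_filter, h1]
          rw [Finset.erase_eq_of_notMem hxn]
          have hym : y ∈ s.filter fun i => f i = c := by simp [Finset.mem_filter, hys, h2]
          have e1 := Finset.card_erase_add_one hym
          rw [if_neg h1, if_pos h2]
          omega
        · have hxn : x ∉ s.filter fun i => f i = c := by simp [Finset.mem_filter, h1]
          have hyn : y ∉ (s.filter fun i => f i = c).erase x := by
            simp only [Finset.mem_erase, Finset.mem_filter]
            tauto
          rw [Finset.erase_eq_of_notMem hxn, Finset.erase_eq_of_notMem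
            (by simpa [Finset.mem_filter] using fun _ => h2)]
          simp [h1, h2]
      have hcnt' : ∀ c : ℝ, (s'.filter fun i => f i = c).card
          = (s'.filter fun i => f i = -c).card := by
        intro c
        have k1 := key c
        have k2 := key (-c)
        have hc := hcnt c
        have e1 : (if f x = c then 1 else 0) = (if f y = -c then (1:ℕ) else 0) := by
          by_cases h : f x = c
          · rw [if_pos h, if_pos (by rw [hfy, h])]
          · rw [if_neg h, if_neg (by rw [hfy]; intro h2; exact h (by linarith))]
        have e2 : (if f y = c then 1 else 0) = (if f x = -c then (1:ℕ) else 0) := by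
          by_cases h : f y = c
          · rw [if_pos h, if_pos (by rw [← h, hfy]; ring)]
          · rw [if_neg h, if_neg (by intro h2; exact h (by rw [hfy, h2]; ring))]
        omega
      have heven' : Even ((s'.filter fun i => f i = (0:ℝ)).card) := by
        have k0 := key 0
        by_cases hfx : f x = 0
        · have hfy0 : f y = 0 := by rw [hfy, hfx]; ring
          rw [if_pos hfx, if_pos hfy0] at k0
          rw [Nat.even_iff] at heven ⊢
          omega
        · have hfy0 : ¬ f y = 0 := by rw [hfy]; intro h; exact hfx (by linarith)
          rw [if_neg hfx, if_neg hfy0] at k0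
          rw [Nat.even_iff] at heven ⊢
          omega
      obtain ⟨σ', hσ1, hσ2, hσ3⟩ := IH (n - 2) (by omega) s' hcard' hcnt' heven'
      have hσ'x : σ' x = x := hσ3 x hxs'
      have hσ'y : σ' y = y := hσ3 y hys'
      -- σ' maps the complement of s' to itself identically, s' to s'
      have hfix : ∀ w, w ≠ x → w ≠ y → σ' w ≠ x ∧ σ' w ≠ y := by
        intro w hwx hwy
        by_cases hw : w ∈ s'
        · have h := (hσ2 w hw).1
          exact ⟨fun hc => hxs' (hc ▸ h), fun hc => hys' (hc ▸ h)⟩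
        · rw [hσ3 w hw]; exact ⟨hwx, hwy⟩
      have hcomm : ∀ w, σ' (Equiv.swap x y w) = Equiv.swap x y (σ' w) := by
        intro w
        by_cases hwx : w = x
        · subst hwx
          rw [Equiv.swap_apply_left, hσ'y, hσ'x, Equiv.swap_apply_left]
        by_cases hwy : w = y
        · subst hwy
          rw [Equiv.swap_apply_right, hσ'x, hσ'y, Equiv.swap_apply_right]
        · obtain ⟨h1, h2⟩ := hfix w hwx hwy
          rw [Equiv.swap_apply_of_ne_of_ne hwx hwy, Equiv.swap_apply_of_ne_of_ne h1 h2]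
      refine ⟨Equiv.swap x y * σ', ?_, ?_, ?_⟩
      · intro z
        simp only [Equiv.Perm.mul_apply]
        rw [← hcomm, Equiv.swap_apply_self, hσ1]
      · intro z hz
        by_cases hzx : z = x
        · subst hzx
          simp only [Equiv.Perm.mul_apply, hσ'x, Equiv.swap_apply_left]
          exact ⟨hys, hyx, hsum⟩
        by_cases hzy : z = y
        · subst hzy
          simp only [Equiv.Perm.mul_apply, hσ'y, Equiv.swap_apply_right]
          exact ⟨hx, fun h => hyx h.symm, by linarith⟩
        · have hz' : z ∈ s' := (hmem' z).2 ⟨hz, hzx, hzy⟩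
          obtain ⟨hm, hne, hs0⟩ := hσ2 z hz'
          have h1 : σ' z ≠ x := fun hc => hxs' (hc ▸ hm)
          have h2 : σ' z ≠ y := fun hc => hys' (hc ▸ hm)
          simp only [Equiv.Perm.mul_apply, Equiv.swap_apply_of_ne_of_ne h1 h2]
          exact ⟨hsub hm, hne, hs0⟩
      · intro z hz
        have hzx : z ≠ x := fun h => hz (h ▸ hx)
        have hzy : z ≠ y := fun h => hz (h ▸ hys)
        have hz' : z ∉ s' := fun h => hz (hsub h)
        simp only [Equiv.Perm.mul_apply, hσ3 z hz',
          Equiv.swap_apply_of_ne_of_ne hzx hzy]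

lemma combinatorial_core (m : ℕ) (lam : Fin (2*m) → ℝ)
    (hnopart : ¬ ∃ σ : Equiv.Perm (Fin (2 * m)),
      (∀ i, σ (σ i) = i) ∧ (∀ i, σ i ≠ i) ∧ ∀ i, lam i + lam (σ i) = 0)
    (p : Fin (2*m+1) → (Bool ⊕ (Fin (2*m) × Bool)) × (Bool ⊕ (Fin (2*m) × Bool)))
    (hadm : ∀ k, (p k = (Sum.inl false, Sum.inl true)) ∨ ∃ i j, lam i + lam j = 0 ∧
       (p k = (Sum.inr (i,false), Sum.inr (j,false)) ∨
        p k = (Sum.inr (i,false), Sum.inr (j,true)) ∨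
        p k = (Sum.inr (i,true), Sum.inr (j,true))))
    (hinj : Function.Injective
      (fun x : Fin (2*m+1) × Bool => cond x.2 (p x.1).2 (p x.1).1)) :
    False := by
  classical
  have hbij : Function.Bijective
      (fun x : Fin (2*m+1) × Bool => cond x.2 (p x.1).2 (p x.1).1) := by
    rw [Fintype.bijective_iff_injective_and_card]
    refine ⟨hinj, ?_⟩
    simp only [Fintype.card_prod, Fintype.card_sum, Fintype.card_bool, Fintype.card_fin]
    ring
  set e := Equiv.ofBijective _ hbij with he
  set partner : (Bool ⊕ (Fin (2*m) × Bool)) → (Bool ⊕ (Fin (2*m) × Bool)) :=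
    fun t => e ((e.symm t).1, !(e.symm t).2) with hpartner
  have hpp : ∀ t, partner (partner t) = t := by
    intro t
    simp only [hpartner, Equiv.symm_apply_apply, Bool.not_not, Prod.mk.eta,
      Equiv.apply_symm_apply]
  have hpne : ∀ t, partner t ≠ t := by
    intro t hc
    have h1 := congrArg e.symm hc
    rw [hpartner, Equiv.symm_apply_apply] at h1
    have h2 := congrArg Prod.snd h1
    simp at h2
  have hpair : ∀ t, (t = (p (e.symm t).1).1 ∧ partner t = (p (e.symm t).1).2)
      ∨ (t = (p (e.symm t).1).2 ∧ partner t = (p (e.symm t).1).1) := by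
    intro t
    cases hb : (e.symm t).2 with
    | false =>
        have hts : e.symm t = ((e.symm t).1, false) := by rw [← hb]
        left
        constructor
        · conv_lhs => rw [← e.apply_symm_apply t, hts]
          rfl
        · simp only [hpartner, hb, Bool.not_false]
          rfl
    | true =>
        have hts : e.symm t = ((e.symm t).1, true) := by rw [← hb]
        right
        constructor
        · conv_lhs => rw [← e.apply_symm_apply t, hts]
          rfl
        · simp only [hpartner, hb, Bool.not_true]
          rfl
  have key : ∀ x : Fin (2*m) × Bool, ∃ y : Fin (2*m) × Bool,
      partner (Sum.inr x) = Sum.inr y ∧ lam x.1 + lam y.1 = 0 := by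
    rintro ⟨i, c⟩
    obtain hP | ⟨i', j', hsum0, hshape⟩ :=
      hadm (e.symm (Sum.inr (i,c) : Bool ⊕ (Fin (2*m) × Bool))).1
    · rcases hpair (Sum.inr (i,c)) with ⟨h1, h2⟩ | ⟨h1, h2⟩ <;> rw [hP] at h1 <;> simp at h1
    · rcases hpair (Sum.inr (i,c)) with ⟨h1, h2⟩ | ⟨h1, h2⟩ <;>
        rcases hshape with h3 | h3 | h3 <;> rw [h3] at h1 h2 <;>
        simp only [Sum.inr.injEq, Prod.mk.injEq] at h1 h2
      · exact ⟨(j', false), h2, by rw [h1.1]; exact hsum0⟩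
      · exact ⟨(j', true), h2, by rw [h1.1]; exact hsum0⟩
      · exact ⟨(j', true), h2, by rw [h1.1]; exact hsum0⟩
      · exact ⟨(i', false), h2, by rw [h1.1]; linarith⟩
      · exact ⟨(i', false), h2, by rw [h1.1]; linarith⟩
      · exact ⟨(i', true), h2, by rw [h1.1]; linarith⟩
  choose μ hμ1 hμ2 using key
  have hμinv : ∀ x, μ (μ x) = x := by
    intro x
    have h0 : (Sum.inr (μ (μ x)) : Bool ⊕ (Fin (2*m) × Bool)) = Sum.inr x := by
      rw [← hμ1, ← hμ1, hpp]
    exact Sum.inr_injective h0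
  have hμne : ∀ x, μ x ≠ x := by
    intro x hc
    exact hpne (Sum.inr x) (by rw [hμ1 x, hc])
  -- counting
  have hdouble : ∀ (P : Fin (2*m) → Prop) [DecidablePred P],
      ((univ : Finset (Fin (2*m) × Bool)).filter fun x => P x.1).card
        = 2 * ((univ : Finset (Fin (2*m))).filter P).card := by
    intro P _
    have h0 : ((univ : Finset (Fin (2*m) × Bool)).filter fun x => P x.1)
        = ((univ : Finset (Fin (2*m))).filter P) ×ˢ (univ : Finset Bool) := by
      ext ⟨a, b⟩
      simp
    rw [h0, Finset.card_product, Finset.card_univ, Fintype.card_bool]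
    ring
  have hbijcnt : ∀ (P Q : Fin (2*m) × Bool → Prop) [DecidablePred P] [DecidablePred Q],
      (∀ x, P x → Q (μ x)) → (∀ x, Q x → P (μ x)) →
      ((univ : Finset (Fin (2*m) × Bool)).filter P).card = (univ.filter Q).card := by
    intro P Q _ _ hPQ hQP
    refine Finset.card_bij' (fun x _ => μ x) (fun x _ => μ x) ?_ ?_ ?_ ?_
    · intro a ha
      simp only [mem_filter, mem_univ, true_and] at ha ⊢
      exact hPQ a ha
    · intro a ha
      simp only [mem_filter, mem_univ, true_and] at ha ⊢
      exact hQP a ha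
    · intro a _
      exact hμinv a
    · intro a _
      exact hμinv a
  have hcnt : ∀ c : ℝ, (((univ : Finset (Fin (2*m)))).filter fun i => lam i = c).card
      = (univ.filter fun i => lam i = -c).card := by
    intro c
    have h1 := hbijcnt (fun x => lam x.1 = c) (fun x => lam x.1 = -c)
      (fun x hx => by have := hμ2 x; linarith)
      (fun x hx => by have := hμ2 x; linarith)
    have d1 := hdouble (fun i => lam i = c)
    have d2 := hdouble (fun i => lam i = -c)
    omega
  have hposneg : (((univ : Finset (Fin (2*m)))).filter fun i => 0 < lam i).card
      = (univ.filter fun i => lam i < 0).card := by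
    have h1 := hbijcnt (fun x => 0 < lam x.1) (fun x => lam x.1 < 0)
      (fun x hx => by have := hμ2 x; linarith)
      (fun x hx => by have := hμ2 x; linarith)
    have d1 := hdouble (fun i => 0 < lam i)
    have d2 := hdouble (fun i => lam i < 0)
    omega
  have heven : Even ((((univ : Finset (Fin (2*m)))).filter fun i => lam i = (0:ℝ)).card) := by
    classical
    have hsplit0 : (((univ : Finset (Fin (2*m)))).filter fun i => lam i = (0:ℝ)).card
        + (univ.filter fun i => ¬ lam i = (0:ℝ)).card = 2*m := by
      rw [Finset.card_filter_add_card_filter_not, Finset.card_univ, Fintype.card_fin]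
    have e1 : (((univ : Finset (Fin (2*m))).filter fun i => ¬ lam i = (0:ℝ)).filter
        fun i => 0 < lam i) = univ.filter fun i => 0 < lam i := by
      ext i
      simp only [mem_filter, mem_univ, true_and]
      constructor
      · exact fun h => h.2
      · exact fun h => ⟨by intro h0; rw [h0] at h; linarith, h⟩
    have e2 : (((univ : Finset (Fin (2*m))).filter fun i => ¬ lam i = (0:ℝ)).filter
        fun i => ¬ 0 < lam i) = univ.filter fun i => lam i < 0 := by
      ext i
      simp only [mem_filter, mem_univ, true_and]
      constructor
      · rintro ⟨h1, h2⟩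
        rcases lt_trichotomy (lam i) 0 with h | h | h
        · exact h
        · exact absurd h h1
        · exact absurd h h2
      · intro h
        exact ⟨by intro h0; rw [h0] at h; linarith, by linarith⟩
    have hsplit1 := Finset.card_filter_add_card_filter_not
      (s := (univ : Finset (Fin (2*m))).filter fun i => ¬ lam i = (0:ℝ))
      (p := fun i => 0 < lam i)
    rw [e1, e2] at hsplit1
    rw [Nat.even_iff]
    omega
  obtain ⟨σ, hσ1, hσ2, hσ3⟩ :=
    exists_involution_aux lam (univ.card) univ rfl hcnt heven
  exact hnopart ⟨σ, hσ1, fun i => (hσ2 i (mem_univ i)).2.1,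
    fun i => (hσ2 i (mem_univ i)).2.2⟩

end AuxLemmas

/-- If there is no partition of `{1,…,2m}` into disjoint pairs `(i,j)` with
`λ_i + λ_j = 0` (i.e. no fixed-point-free involution `σ` with
`λ_i + λ_{σ i} = 0` for all `i`), then every 2-form in the span of
`{φ⁰∧φ̄⁰} ∪ {φ^i∧φ^j, φ^i∧φ̄^j, φ̄^i∧φ̄^j : λ_i + λ_j = 0}` is degenerate:
its `(2m+1)`-st power vanishes. -/
theorem no_partition_implies_degenerate (m : ℕ) (lam : Fin (2 * m) → ℝ)
    {V : Type*} [AddCommGroup V] [Module ℂ V]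
    (φ0 φb0 : V) (φ φb : Fin (2 * m) → V)
    (hnopart : ¬ ∃ σ : Equiv.Perm (Fin (2 * m)),
      (∀ i, σ (σ i) = i) ∧ (∀ i, σ i ≠ i) ∧ ∀ i, lam i + lam (σ i) = 0)
    (ω : ExteriorAlgebra ℂ V)
    (hω : ω ∈ Submodule.span ℂ
      ({ι ℂ φ0 * ι ℂ φb0} ∪
        {x | ∃ i j, lam i + lam j = 0 ∧
          (x = ι ℂ (φ i) * ι ℂ (φ j) ∨ x = ι ℂ (φ i) * ι ℂ (φb j) ∨
            x = ι ℂ (φb i) * ι ℂ (φb j))})) :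
    ω ^ (2 * m + 1) = 0 := by
  classical
  set vec : Bool ⊕ (Fin (2 * m) × Bool) → V :=
    Sum.elim (fun b => cond b φb0 φ0) (fun y => cond y.2 (φb y.1) (φ y.1)) with hvec
  have hmem := Submodule.pow_mem_pow _ hω (2 * m + 1)
  rw [Submodule.span_pow] at hmem
  suffices hz : ∀ x ∈ (({ι ℂ φ0 * ι ℂ φb0} ∪
        {x | ∃ i j, lam i + lam j = 0 ∧
          (x = ι ℂ (φ i) * ι ℂ (φ j) ∨ x = ι ℂ (φ i) * ι ℂ (φb j) ∨
            x = ι ℂ (φb i) * ι ℂ (φb j))}) : Set (ExteriorAlgebra ℂ V)) ^ (2 * m + 1),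
          x = 0 by
    rw [Submodule.span_eq_bot.2 hz, Submodule.mem_bot] at hmem
    exact hmem
  intro x hx
  rw [Set.mem_pow] at hx
  obtain ⟨f, rfl⟩ := hx
  have hp : ∀ k, ∃ s : (Bool ⊕ (Fin (2 * m) × Bool)) × (Bool ⊕ (Fin (2 * m) × Bool)),
      ((s = (Sum.inl false, Sum.inl true)) ∨ ∃ i j, lam i + lam j = 0 ∧
        (s = (Sum.inr (i,false), Sum.inr (j,false)) ∨
         s = (Sum.inr (i,false), Sum.inr (j,true)) ∨
         s = (Sum.inr (i,true), Sum.inr (j,true)))) ∧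
      ((f k : ExteriorAlgebra ℂ V) = ι ℂ (vec s.1) * ι ℂ (vec s.2)) := by
    intro k
    rcases (f k).2 with h | ⟨i, j, hsum, h | h | h⟩
    · exact ⟨(Sum.inl false, Sum.inl true), Or.inl rfl, by rw [Set.mem_singleton_iff.1 h]; rfl⟩
    · exact ⟨(Sum.inr (i,false), Sum.inr (j,false)),
        Or.inr ⟨i, j, hsum, Or.inl rfl⟩, by rw [h]; rfl⟩
    · exact ⟨(Sum.inr (i,false), Sum.inr (j,true)),
        Or.inr ⟨i, j, hsum, Or.inr (Or.inl rfl)⟩, by rw [h]; rfl⟩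
    · exact ⟨(Sum.inr (i,true), Sum.inr (j,true)),
        Or.inr ⟨i, j, hsum, Or.inr (Or.inr rfl)⟩, by rw [h]; rfl⟩
  choose q hadm hval using hp
  have hprod : (List.ofFn fun k => ((f k : ExteriorAlgebra ℂ V))).prod
      = (List.ofFn fun k => ι ℂ (vec (q k).1) * ι ℂ (vec (q k).2)).prod := by
    simp only [hval]
  by_cases hinj : Function.Injective
      (fun x : Fin (2 * m + 1) × Bool => cond x.2 (q x.1).2 (q x.1).1)
  · exact (combinatorial_core m lam hnopart q hadm hinj).elim
  · rw [hprod, prod_ofFn_pairs]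
    apply prod_map_iota_eq_zero
    intro hnd
    rw [List.nodup_flatten] at hnd
    obtain ⟨hnd1, hnd2⟩ := hnd
    rw [List.pairwise_ofFn] at hnd2
    obtain ⟨a, a', haa', hne⟩ := Function.not_injective_iff.1 hinj
    have haa2 : cond a.2 (q a.1).2 (q a.1).1 = cond a'.2 (q a'.1).2 (q a'.1).1 := haa'
    have hmem1 : vec (cond a.2 (q a.1).2 (q a.1).1) ∈ [vec (q a.1).1, vec (q a.1).2] := by
      cases hb : a.2 <;> simp
    have hmem2 : vec (cond a.2 (q a.1).2 (q a.1).1) ∈ [vec (q a'.1).1, vec (q a'.1).2] := by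
      rw [haa2]
      cases hb : a'.2 <;> simp
    by_cases hk : a.1 = a'.1
    · have hb : a.2 ≠ a'.2 := fun h => hne (Prod.ext hk h)
      have hqq : (q a.1).1 = (q a.1).2 := by
        rw [hk] at haa2 ⊢
        cases h2 : a.2 <;> cases h2' : a'.2 <;> rw [h2, h2'] at haa2 hb
        · exact absurd rfl hb
        · simpa using haa2
        · simpa using haa2.symm
        · exact absurd rfl hb
      have hnodup := hnd1 [vec (q a.1).1, vec (q a.1).2] (List.mem_ofFn.2 ⟨a.1, rfl⟩)
      rw [hqq] at hnodup
      simp at hnodup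
    · rcases lt_or_gt_of_ne hk with hlt | hlt
      · exact hnd2 hlt hmem1 hmem2
      · exact hnd2 hlt hmem2 hmem1
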